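/- Let G be a graph, C ⊆ V(G) a clique in G, and let G' be the graph obtained from G by contracting C to a single vertex u_C and attaching a new pendant vertex v_C adjacent only to u_C. If D' is a connected vertex cover of G' containing u_C but not v_C, then D = (D' \ {u_C}) ∪ C is a connected vertex cover of G. -/

import Mathlib

/-- `X` is a vertex cover of `G`: every edge has at least one endpoint in `X`. -/
def IsVertexCover {V : Type*} (G : SimpleGraph V) (X : Set V) : Prop :=
  ∀ ⦃u v : V⦄, G.Adj u v → u ∈ X ∨ v ∈ X

/-- `X` is a connected vertex cover of `G`. -/
def IsConnectedVertexCover {V : Type*} (G : SimpleGraph V) (X : Set V) : Prop :=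
  IsVertexCover G X ∧ (G.induce X).Connected

/-- The graph obtained from `G` by contracting the set `C` to a single vertex `u_C`
(represented by `some none`) and attaching a new pendant vertex `v_C`
(represented by `none`) adjacent only to `u_C`. -/
def contractCliquePendant {V : Type*} (G : SimpleGraph V) (C : Set V) :
    SimpleGraph (Option (Option {v : V // v ∉ C})) :=
  SimpleGraph.fromRel (fun x y =>
    match x, y with
    | some (some a), some (some b) => G.Adj a.1 b.1
    | some none, some (some a) => ∃ s ∈ C, G.Adj s a.1
    | none, some none => True
    | _, _ => False)

/-- Representative vertex for a vertex of the contracted graph. -/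
def vcvRep {V : Type} (C : Set V) (c₀ : V) : Option (Option {v : V // v ∉ C}) → V
  | some (some a) => a.1
  | _ => c₀

/-- If `D'` is a connected vertex cover of the graph obtained by contracting a clique
`C` to `u_C` and adding a pendant `v_C`, with `u_C ∈ D'` and `v_C ∉ D'`, then
`(D' \ {u_C}) ∪ C` is a connected vertex cover of `G`. -/
theorem stmt16 {V : Type} [Fintype V] (G : SimpleGraph V) (hG : G.Connected)
    (C : Set V) (hCne : C.Nonempty) (hC : G.IsClique C)
    (D' : Set (Option (Option {v : V // v ∉ C})))
    (hD' : IsConnectedVertexCover (contractCliquePendant G C) D')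
    (huC : some none ∈ D') (hvC : none ∉ D')
    (D : Set V)
    (hD : D = {v : V | ∃ h : v ∉ C, some (some ⟨v, h⟩) ∈ D'} ∪ C) :
    IsConnectedVertexCover G D := by
  obtain ⟨hcov', hconn'⟩ := hD'
  obtain ⟨c₀, hc₀⟩ := hCne
  have hCD : C ⊆ D := by intro c hc; rw [hD]; exact Or.inr hc
  have hmemD : ∀ (a : {v : V // v ∉ C}), some (some a) ∈ D' → a.1 ∈ D := by
    intro a ha; rw [hD]; exact Or.inl ⟨a.2, ha⟩
  constructor
  · intro u v huv
    by_cases hu : u ∈ C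
    · exact Or.inl (hCD hu)
    by_cases hv : v ∈ C
    · exact Or.inr (hCD hv)
    · have hadj : (contractCliquePendant G C).Adj (some (some ⟨u, hu⟩)) (some (some ⟨v, hv⟩)) := by
        refine (SimpleGraph.fromRel_adj _ _ _).2 ⟨?_, Or.inl huv⟩
        simp only [ne_eq, Option.some.injEq, Subtype.mk.injEq]
        exact G.ne_of_adj huv
      rcases hcov' hadj with h | h
      · exact Or.inl (hmemD ⟨u, hu⟩ h)
      · exact Or.inr (hmemD ⟨v, hv⟩ h)
  · have hCreach : ∀ (c c' : V) (hc : c ∈ C) (hc' : c' ∈ C),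
        (G.induce D).Reachable ⟨c, hCD hc⟩ ⟨c', hCD hc'⟩ := by
      intro c c' hc hc'
      rcases eq_or_ne c c' with rfl | hne
      · exact SimpleGraph.Reachable.refl _
      · exact SimpleGraph.Adj.reachable (by simpa using hC hc hc' hne)
    have hrep : ∀ x : ↥D', vcvRep C c₀ x.1 ∈ D := by
      rintro ⟨(_ | (_ | a)), hx⟩
      · exact absurd hx hvC
      · exact hCD hc₀
      · exact hmemD a hx
    have step : ∀ (x y : ↥D'),
        ((contractCliquePendant G C).induce D').Adj x y →
        (G.induce D).Reachable ⟨vcvRep C c₀ x.1, hrep x⟩ ⟨vcvRep C c₀ y.1, hrep y⟩ := by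
      rintro ⟨x, hx⟩ ⟨y, hy⟩ hadj
      have h : (contractCliquePendant G C).Adj x y := hadj
      rw [contractCliquePendant, SimpleGraph.fromRel_adj] at h
      obtain ⟨hne, hr⟩ := h
      rcases x with _ | (_ | a)
      · exact absurd hx hvC
      rcases y with _ | (_ | b)
      · exact absurd hy hvC
      · -- x = some none, y = some none
        exact absurd rfl hne
      · -- x = some none, y = some (some b)
        rcases hr with ⟨s, hs, hsb⟩ | h
        · exact (hCreach c₀ s hc₀ hs).trans
            (SimpleGraph.Adj.reachable (by simpa [vcvRep] using hsb))
        · exact absurd h (by simp)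
      rcases y with _ | (_ | b)
      · exact absurd hy hvC
      · -- x = some (some a), y = some none
        rcases hr with h | ⟨s, hs, hsa⟩
        · exact absurd h (by simp)
        · exact (SimpleGraph.Adj.reachable (by simpa [vcvRep] using hsa.symm)).trans
            (hCreach s c₀ hs hc₀)
      · -- both some some
        rcases hr with hab | hba
        · exact SimpleGraph.Adj.reachable (by simpa [vcvRep] using hab)
        · exact SimpleGraph.Adj.reachable (by simpa [vcvRep] using hba.symm)
    have key : ∀ x y : ↥D', ((contractCliquePendant G C).induce D').Reachable x y →
        (G.induce D).Reachable ⟨vcvRep C c₀ x.1, hrep x⟩ ⟨vcvRep C c₀ y.1, hrep y⟩ := by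
      intro x y hxy
      obtain ⟨w⟩ := hxy
      induction w with
      | nil => exact SimpleGraph.Reachable.refl _
      | cons h p ih => exact (step _ _ h).trans ih
    have toC : ∀ u : ↥D, (G.induce D).Reachable u ⟨c₀, hCD hc₀⟩ := by
      rintro ⟨u, hu⟩
      rw [hD] at hu
      rcases hu with ⟨hu', hmem⟩ | huMem
      · exact key ⟨some (some ⟨u, hu'⟩), hmem⟩ ⟨some none, huC⟩
          (hconn'.preconnected _ _)
      · exact hCreach u c₀ huMem hc₀
    have : Nonempty ↥D := ⟨⟨c₀, hCD hc₀⟩⟩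
    exact SimpleGraph.Connected.mk fun u v => (toC u).trans (toC v).symm
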